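/- Let α be a geodesic in the hyperbolic plane and let s and t be geodesic segments lying (weakly) on the same side of α, with t disjoint from α, and let u be a geodesic segment lying strictly on the opposite side of α. Then no geodesic can cross s, then u, then t in that order. -/

import Mathlib

open UpperHalfPlane Set Filter MeasureTheory Pointwise

local notation "SL2R" => Matrix.SpecialLinearGroup (Fin 2) ℝ

/-- A subgroup of `SL(2,ℝ)`, acting on `ℍ` by Möbius transformations, is
Fuchsian iff it acts properly discontinuously (equivalent to discreteness). -/
def IsFuchsian (Γ : Subgroup SL2R) : Prop :=
  ∀ z : ℍ, ∀ r : ℝ, {γ : Γ | dist (((γ : SL2R)) • z) z ≤ r}.Finite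

/-- The Dirichlet domain of `Γ` centered at `x`. -/
def DirichletDomain (Γ : Subgroup SL2R) (x : ℍ) : Set ℍ :=
  {z : ℍ | ∀ γ : Γ, dist z x ≤ dist z (((γ : SL2R)) • x)}

/-- `x` is fixed by no element of `Γ` other than `±1` (which act trivially). -/
def FreeCenter (Γ : Subgroup SL2R) (x : ℍ) : Prop :=
  ∀ γ : Γ, ((γ : SL2R)) • x = x → (γ : SL2R) = 1 ∨ (γ : SL2R) = -1

/-- The hyperbolic area of a subset of the upper half-plane. -/
noncomputable def hypArea (S : Set ℍ) : ENNReal :=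
  ∫⁻ z in ((fun w : ℍ => (w : ℂ)) '' S), ENNReal.ofReal (1 / z.im ^ 2)

/-- A (finite) vertex of the tessellation of `ℍ` by the copies of `D`:
a point of `ℍ` lying in at least three distinct tiles. -/
def IsTessVertex (Γ : Subgroup SL2R) (D : Set ℍ) (v : ℍ) : Prop :=
  ∃ a b c : Γ, (a : SL2R) • D ≠ (b : SL2R) • D ∧ (a : SL2R) • D ≠ (c : SL2R) • D ∧
    (b : SL2R) • D ≠ (c : SL2R) • D ∧
    v ∈ (a : SL2R) • D ∧ v ∈ (b : SL2R) • D ∧ v ∈ (c : SL2R) • D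

/-- An edge of the tessellation: the (infinite) intersection of two distinct
tiles. -/
def IsTessEdge (Γ : Subgroup SL2R) (D : Set ℍ) (e : Set ℍ) : Prop :=
  ∃ a b : Γ, (a : SL2R) • D ≠ (b : SL2R) • D ∧
    e = ((a : SL2R) • D) ∩ ((b : SL2R) • D) ∧ e.Infinite

/-- A complete unit-speed geodesic of `ℍ`. -/
def IsGeodesicLine (γ : ℝ → ℍ) : Prop :=
  ∀ s t : ℝ, dist (γ s) (γ t) = |s - t|

/-- Hyperbolic convexity of a subset of `ℍ`. -/
def IsHConvex (S : Set ℍ) : Prop :=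
  ∀ γ : ℝ → ℍ, IsGeodesicLine γ →
    ∀ a b : ℝ, γ a ∈ S → γ b ∈ S → ∀ c ∈ Set.uIcc a b, γ c ∈ S


/-- A geodesic segment of `ℍ`, viewed as a set. -/
def IsGeodesicSegment (s : Set ℍ) : Prop :=
  ∃ (σ : ℝ → ℍ) (a b : ℝ), a ≤ b ∧
    (∀ u ∈ Set.Icc a b, ∀ w ∈ Set.Icc a b, dist (σ u) (σ w) = |u - w|) ∧
    s = σ '' Set.Icc a b


lemma stmt17aux_mem_uIcc_of_abs {p q x : ℝ} (h : |p - x| + |x - q| = |p - q|) :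
    x ∈ Set.uIcc p q := by
  rcases le_total p q with hpq | hpq
  · rw [Set.uIcc_of_le hpq, Set.mem_Icc]
    have h1 := le_abs_self (p - x)
    have h2 := le_abs_self (x - q)
    have h3 := neg_abs_le (p - x)
    have h4 := neg_abs_le (x - q)
    have h5 : |p - q| = q - p := by rw [abs_of_nonpos (by linarith)]; ring
    constructor <;> linarith
  · rw [Set.uIcc_of_ge hpq, Set.mem_Icc]
    have h1 := le_abs_self (p - x)
    have h2 := le_abs_self (x - q)
    have h3 := neg_abs_le (p - x)
    have h4 := neg_abs_le (x - q)
    have h5 : |p - q| = p - q := abs_of_nonneg (by linarith)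
    constructor <;> linarith

lemma stmt17aux_uIcc_unique {p q x y : ℝ} (hx : x ∈ Set.uIcc p q) (hy : y ∈ Set.uIcc p q)
    (h : |x - p| = |y - p|) : x = y := by
  rcases le_total p q with hpq | hpq
  · rw [Set.uIcc_of_le hpq, Set.mem_Icc] at hx hy
    rw [abs_of_nonneg (by linarith), abs_of_nonneg (by linarith)] at h
    linarith
  · rw [Set.uIcc_of_ge hpq, Set.mem_Icc] at hx hy
    rw [abs_of_nonpos (by linarith), abs_of_nonpos (by linarith)] at h
    linarith

noncomputable def stmt17aux_S : Matrix.SpecialLinearGroup (Fin 2) ℝ :=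
  ⟨!![0, -1; 1, 0], by simp [Matrix.det_fin_two_of]⟩

lemma stmt17aux_S_smul (z : ℍ) : ((stmt17aux_S • z : ℍ) : ℂ) = -(↑z)⁻¹ := by
  rw [specialLinearGroup_apply, coe_mk]
  simp [stmt17aux_S]
  rw [neg_div, ← one_div, div_eq_inv_mul, mul_one]

lemma stmt17aux_key_re (c r : ℝ) (hr : 0 < r) (z : ℍ)
    (hz : Complex.normSq (↑z - (c : ℂ)) = r ^ 2) :
    ((1 / (2 * r)) +ᵥ (stmt17aux_S • ((-(c - r)) +ᵥ z))).re = 0 := by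
  set w : ℍ := (-(c - r)) +ᵥ z with hw
  have hwre : (w : ℂ).re = z.re - c + r := by
    rw [hw, coe_vadd]; simp [coe_re]; ring
  have hwim : (w : ℂ).im = z.im := by rw [hw, coe_vadd]; simp
  have hz' : (z.re - c) ^ 2 + z.im ^ 2 = r ^ 2 := by
    rw [Complex.normSq_apply] at hz
    simp [coe_re, coe_im] at hz
    nlinarith [hz]
  have him : (0:ℝ) < z.im := z.im_pos
  have hwrepos : 0 < (w : ℂ).re := by nlinarith
  have hns : Complex.normSq (w : ℂ) = 2 * r * (w : ℂ).re := by
    rw [Complex.normSq_apply, hwre, hwim]; nlinarith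
  have hre : (stmt17aux_S • w).re = -((w : ℂ).re / Complex.normSq (w : ℂ)) := by
    rw [← coe_re, stmt17aux_S_smul, Complex.neg_re, Complex.inv_re]
  have hne : w.re ≠ 0 := by rw [← coe_re]; exact ne_of_gt hwrepos
  rw [vadd_re, hre, hns, coe_re]
  field_simp
  ring

lemma stmt17aux_circ (c r x1 y1 x2 y2 n1 n2 : ℝ)
    (hc : c * (2 * (x1 - x2)) = n1 - n2)
    (hn1 : n1 = x1 ^ 2 + y1 ^ 2) (hn2 : n2 = x2 ^ 2 + y2 ^ 2) :
    (x2 - c) ^ 2 + y2 ^ 2 = (x1 - c) ^ 2 + y1 ^ 2 := by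
  linear_combination hc + hn1 - hn2

lemma stmt17aux_normalizer (a b : ℍ) :
    ∃ f : ℍ → ℍ, Isometry f ∧ (f a).re = 0 ∧ (f b).re = 0 := by
  rcases eq_or_ne a.re b.re with h | h
  · exact ⟨((-a.re) +ᵥ ·), isometry_real_vadd _, by simp, by simp [← h]⟩
  · have hcne : a.re - b.re ≠ 0 := sub_ne_zero.2 h
    set c : ℝ := (Complex.normSq a - Complex.normSq b) / (2 * (a.re - b.re)) with hcdef
    set r : ℝ := Real.sqrt (Complex.normSq ((a : ℂ) - (c : ℂ))) with hrdef
    have ha' : Complex.normSq ((a : ℂ) - (c : ℂ)) = (a.re - c) ^ 2 + a.im ^ 2 := by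
      rw [Complex.normSq_apply]; simp [coe_re, coe_im]; ring
    have hb' : Complex.normSq ((b : ℂ) - (c : ℂ)) = (b.re - c) ^ 2 + b.im ^ 2 := by
      rw [Complex.normSq_apply]; simp [coe_re, coe_im]; ring
    have hrpos : 0 < r := Real.sqrt_pos.2 (by rw [ha']; nlinarith [a.im_pos, sq_nonneg (a.re - c)])
    have hra : Complex.normSq ((a : ℂ) - (c : ℂ)) = r ^ 2 :=
      (Real.sq_sqrt (Complex.normSq_nonneg _)).symm
    have hna : Complex.normSq (a : ℂ) = a.re ^ 2 + a.im ^ 2 := by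
      rw [Complex.normSq_apply]; simp [coe_re, coe_im]; ring
    have hnb : Complex.normSq (b : ℂ) = b.re ^ 2 + b.im ^ 2 := by
      rw [Complex.normSq_apply]; simp [coe_re, coe_im]; ring
    have hc : c * (2 * (a.re - b.re)) = Complex.normSq (a : ℂ) - Complex.normSq (b : ℂ) := by
      rw [hcdef]; field_simp
    have hrb : Complex.normSq ((b : ℂ) - (c : ℂ)) = r ^ 2 := by
      rw [hb', ← hra, ha']
      exact stmt17aux_circ c r a.re a.im b.re b.im _ _ hc hna hnb
    exact ⟨fun z => (1 / (2 * r)) +ᵥ (stmt17aux_S • ((-(c - r)) +ᵥ z)),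
      (isometry_real_vadd _).comp ((isometry_smul ℍ stmt17aux_S).comp (isometry_real_vadd _)),
      stmt17aux_key_re c r hrpos a hra, stmt17aux_key_re c r hrpos b hrb⟩

lemma stmt17aux_axis {a b m : ℍ} (ha : a.re = 0) (hb : b.re = 0)
    (h : dist a m + dist m b = dist a b) :
    m.re = 0 ∧ Real.log m.im ∈ Set.uIcc (Real.log a.im) (Real.log b.im) := by
  have h1 := dist_log_im_le a m
  have h2 := dist_log_im_le m b
  have hab : dist a b = dist (Real.log a.im) (Real.log b.im) :=
    UpperHalfPlane.dist_of_re_eq (ha.trans hb.symm)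
  have htri := dist_triangle (Real.log a.im) (Real.log m.im) (Real.log b.im)
  have e1 : dist a m = dist (Real.log a.im) (Real.log m.im) := by linarith
  have e3 : dist (Real.log a.im) (Real.log m.im) + dist (Real.log m.im) (Real.log b.im)
      = dist (Real.log a.im) (Real.log b.im) := by linarith
  refine ⟨?_, stmt17aux_mem_uIcc_of_abs (by simpa [Real.dist_eq] using e3)⟩
  have him := a.im_pos
  have him2 := m.im_pos
  set mv : ℍ := mk ⟨0, m.im⟩ m.im_pos with hmv
  have hmvre : mv.re = 0 := rfl
  have hmvim : mv.im = m.im := rfl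
  have e2 : dist a mv = dist a m := by
    rw [UpperHalfPlane.dist_of_re_eq (by rw [ha, hmvre]), hmvim, e1]
  have hcosh := UpperHalfPlane.cosh_dist a m
  have hcosh2 := UpperHalfPlane.cosh_dist a mv
  rw [e2, hcosh, hmvim] at hcosh2
  have hd1 : dist (a : ℂ) (m : ℂ) ^ 2 = (a.re - m.re) ^ 2 + (a.im - m.im) ^ 2 := by
    rw [Complex.dist_eq, Complex.sq_norm, Complex.normSq_apply]
    simp [coe_re, coe_im]; ring
  have hd2 : dist (a : ℂ) (mv : ℂ) ^ 2 = a.re ^ 2 + (a.im - m.im) ^ 2 := by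
    rw [Complex.dist_eq, Complex.sq_norm, Complex.normSq_apply, hmv]
    simp [coe_re, coe_im]; ring
  rw [hd1, hd2] at hcosh2
  have hD : (0:ℝ) < 2 * a.im * m.im := by positivity
  have : (a.re - m.re) ^ 2 + (a.im - m.im) ^ 2 = a.re ^ 2 + (a.im - m.im) ^ 2 := by
    field_simp at hcosh2
    linarith
  rw [ha] at this
  have : m.re ^ 2 = 0 := by nlinarith [this]
  exact sq_eq_zero_iff.mp this

lemma stmt17aux_unique {a b m m' : ℍ}
    (h1 : dist a m + dist m b = dist a b)
    (h2 : dist a m' + dist m' b = dist a b)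
    (h3 : dist a m = dist a m') : m = m' := by
  obtain ⟨f, hf, hfa, hfb⟩ := stmt17aux_normalizer a b
  have d : ∀ x y : ℍ, dist (f x) (f y) = dist x y := fun x y => hf.dist_eq x y
  have h1' : dist (f a) (f m) + dist (f m) (f b) = dist (f a) (f b) := by
    rw [d, d, d]; exact h1
  have h2' : dist (f a) (f m') + dist (f m') (f b) = dist (f a) (f b) := by
    rw [d, d, d]; exact h2
  obtain ⟨hre, hmem⟩ := stmt17aux_axis hfa hfb h1'
  obtain ⟨hre', hmem'⟩ := stmt17aux_axis hfa hfb h2'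
  have h3' : dist (f a) (f m) = dist (f a) (f m') := by rw [d, d]; exact h3
  rw [UpperHalfPlane.dist_of_re_eq (hfa.trans hre.symm),
    UpperHalfPlane.dist_of_re_eq (hfa.trans hre'.symm)] at h3'
  have hlog : Real.log (f m).im = Real.log (f m').im := by
    apply stmt17aux_uIcc_unique hmem hmem'
    simpa [Real.dist_eq, abs_sub_comm] using h3'
  have him : (f m).im = (f m').im := by
    have := congrArg Real.exp hlog
    rwa [Real.exp_log (f m).im_pos, Real.exp_log (f m').im_pos] at this
  exact hf.injective (ext' (hre.trans hre'.symm) him)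


lemma stmt17aux_cross {α γ : ℝ → ℍ} (hγ : Continuous γ) (w₀ : ℍ) {c d e e' : ℝ}
    (hcd : c ≤ d) (he : e ∈ Set.Icc c d) (he' : e' ∈ Set.Icc c d)
    (hC : γ e ∈ connectedComponentIn (Set.range α)ᶜ w₀)
    (hnC : γ e' ∉ connectedComponentIn (Set.range α)ᶜ w₀) :
    ∃ r ∈ Set.Icc c d, γ r ∈ Set.range α := by
  by_contra hcon
  push_neg at hcon
  have hsub : γ '' Set.Icc c d ⊆ (Set.range α)ᶜ := by
    rintro _ ⟨r, hr, rfl⟩; exact hcon r hr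
  have hpc : IsPreconnected (γ '' Set.Icc c d) :=
    isPreconnected_Icc.image _ hγ.continuousOn
  have hsub2 := hpc.subset_connectedComponentIn ⟨e, he, rfl⟩ hsub
  rw [← connectedComponentIn_eq hC] at hsub2
  exact hnC (hsub2 ⟨e', he', rfl⟩)

lemma stmt17aux_geo_cont {γ : ℝ → ℍ} (h : IsGeodesicLine γ) : Continuous γ :=
  (Isometry.of_dist_eq fun s t => by rw [h s t, Real.dist_eq]).continuous

/-- let `α` be a geodesic, let `s` and `t` be geodesic segments
lying weakly on the same side of `α` with `t` disjoint from `α`, and let `u` be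
a geodesic segment lying strictly on the opposite side.  Then no geodesic can
cross `s`, then `u`, then `t`, in this order. -/
theorem stmt17 (α : ℝ → ℍ) (hα : IsGeodesicLine α)
    (s t u : Set ℍ)
    (hs : IsGeodesicSegment s) (ht : IsGeodesicSegment t)
    (hu : IsGeodesicSegment u)
    -- `w₀` marks the side of `α` containing `s` and `t`
    (w₀ : ℍ) (hw₀ : w₀ ∉ Set.range α)
    (hsside : s ⊆ connectedComponentIn (Set.range α)ᶜ w₀ ∪ Set.range α)
    (htside : t ⊆ connectedComponentIn (Set.range α)ᶜ w₀)
    (huside : u ⊆ (connectedComponentIn (Set.range α)ᶜ w₀ ∪ Set.range α)ᶜ) :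
    ¬ ∃ (γ : ℝ → ℍ) (_ : IsGeodesicLine γ) (t₁ t₂ t₃ : ℝ),
        t₁ < t₂ ∧ t₂ < t₃ ∧ γ t₁ ∈ s ∧ γ t₂ ∈ u ∧ γ t₃ ∈ t := by
  rintro ⟨γ, hγ, t₁, t₂, t₃, h12, h23, hm1, hm2, hm3⟩
  have hγc : Continuous γ := stmt17aux_geo_cont hγ
  have hu2 := huside hm2
  have ht2nC : γ t₂ ∉ connectedComponentIn (Set.range α)ᶜ w₀ := fun h => hu2 (Or.inl h)
  have ht2nα : γ t₂ ∉ Set.range α := fun h => hu2 (Or.inr h)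
  obtain ⟨r₂, hr₂I, hr₂⟩ := stmt17aux_cross (α := α) hγc w₀ h23.le
    (Set.right_mem_Icc.2 h23.le) (Set.left_mem_Icc.2 h23.le) (htside hm3) ht2nC
  have hr1ex : ∃ r₁ ∈ Set.Icc t₁ t₂, γ r₁ ∈ Set.range α := by
    rcases hsside hm1 with h | h
    · exact stmt17aux_cross (α := α) hγc w₀ h12.le
        (Set.left_mem_Icc.2 h12.le) (Set.right_mem_Icc.2 h12.le) h ht2nC
    · exact ⟨t₁, Set.left_mem_Icc.2 h12.le, h⟩
  obtain ⟨r₁, hr₁I, hr₁⟩ := hr1ex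
  have hr1lt : r₁ < t₂ := lt_of_le_of_ne hr₁I.2 fun h => ht2nα (h ▸ hr₁)
  have hr2gt : t₂ < r₂ := lt_of_le_of_ne hr₂I.1 fun h => ht2nα (h ▸ hr₂)
  obtain ⟨p, hp⟩ := hr₁
  obtain ⟨q, hq⟩ := hr₂
  -- distances along γ
  have dg1 : dist (γ r₁) (γ t₂) = t₂ - r₁ := by
    rw [hγ r₁ t₂, abs_of_nonpos (by linarith)]; ring
  have dg2 : dist (γ t₂) (γ r₂) = r₂ - t₂ := by
    rw [hγ t₂ r₂, abs_of_nonpos (by linarith)]; ring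
  have dg3 : dist (γ r₁) (γ r₂) = r₂ - r₁ := by
    rw [hγ r₁ r₂, abs_of_nonpos (by linarith)]; ring
  have dpq : |p - q| = r₂ - r₁ := by
    rw [← hα p q, hp, hq, dg3]
  have hrne : r₂ - r₁ ≠ 0 := by linarith
  set p' : ℝ := p + (q - p) * ((t₂ - r₁) / (r₂ - r₁)) with hp'
  have dq1 : dist (α p) (α p') = t₂ - r₁ := by
    rw [hα p p', hp']
    have : p - (p + (q - p) * ((t₂ - r₁) / (r₂ - r₁))) = -((q - p) * ((t₂ - r₁) / (r₂ - r₁))) := by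
      ring
    rw [this, abs_neg, abs_mul, abs_div, abs_sub_comm q p, dpq,
      abs_of_nonneg (by linarith : (0:ℝ) ≤ t₂ - r₁), abs_of_nonneg (by linarith : (0:ℝ) ≤ r₂ - r₁)]
    field_simp
  have dq2 : dist (α p') (α q) = r₂ - t₂ := by
    rw [hα p' q, hp']
    have : p + (q - p) * ((t₂ - r₁) / (r₂ - r₁)) - q
        = -((q - p) * ((r₂ - t₂) / (r₂ - r₁))) := by
      field_simp
      ring
    rw [this, abs_neg, abs_mul, abs_div, abs_sub_comm q p, dpq,
      abs_of_nonneg (by linarith : (0:ℝ) ≤ r₂ - t₂), abs_of_nonneg (by linarith : (0:ℝ) ≤ r₂ - r₁)]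
    field_simp
  have h1 : dist (γ r₁) (γ t₂) + dist (γ t₂) (γ r₂) = dist (γ r₁) (γ r₂) := by
    rw [dg1, dg2, dg3]; ring
  have h2 : dist (γ r₁) (α p') + dist (α p') (γ r₂) = dist (γ r₁) (γ r₂) := by
    rw [← hp, ← hq, dq1, dq2, hp, hq, dg3]; ring
  have h3 : dist (γ r₁) (γ t₂) = dist (γ r₁) (α p') := by
    rw [dg1, ← hp, dq1]
  have heq : γ t₂ = α p' := stmt17aux_unique h1 h2 h3
  exact ht2nα (heq ▸ ⟨p', rfl⟩)
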